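/- Let $1 < p \leq 2$ and $n \geq 2$. Define $f_n(x_1,\ldots,x_n) = \left(\sum_{k=1}^n x_k\right)^p - \frac{n^p}{\sum_{i=1}^n i^{p-1}} \sum_{k=1}^n x_k \left(\sum_{i=1}^k x_i\right)^{p-1}$ on non-negative, non-increasing tuples. Then $f_n(x) = 0$ with $x_1 \geq \cdots \geq x_n \geq 0$ and $x_1 > 0$ if and only if $x_1 = x_2 = \cdots = x_n$. -/

import Mathlib

set_option maxHeartbeats 1000000
open Finset

lemma tangent_rpow {q a b : ℝ} (hq0 : 0 < q) (hq1 : q ≤ 1) (ha : 0 < a) (hab : a ≤ b) :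
    b ^ q - a ^ q ≤ q * a ^ (q - 1) * (b - a) := by
  have hb : 0 < b := ha.trans_le hab
  have hs : -1 ≤ b / a - 1 := by
    have : 0 < b / a := div_pos hb ha
    linarith
  have hber := rpow_one_add_le_one_add_mul_self hs hq0.le hq1
  have h1 : (1 : ℝ) + (b / a - 1) = b / a := by ring
  rw [h1] at hber
  have h2 : (b / a) ^ q = b ^ q / a ^ q := Real.div_rpow hb.le ha.le q
  rw [h2] at hber
  have haq : 0 < a ^ q := Real.rpow_pos_of_pos ha q
  have h3 : a ^ (q - 1) = a ^ q / a := by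
    rw [Real.rpow_sub ha, Real.rpow_one]
  rw [h3]
  have := mul_le_mul_of_nonneg_left hber haq.le
  calc b ^ q - a ^ q = a ^ q * (b ^ q / a ^ q) - a ^ q := by field_simp
    _ ≤ a ^ q * (1 + q * (b / a - 1)) - a ^ q := by linarith
    _ = q * (a ^ q / a) * (b - a) := by field_simp; ring

lemma abel_id (ψ V : ℕ → ℝ) (n : ℕ) :
    ∑ k ∈ range n, (V (k+1) - V k) * ψ (k+1)
      = V n * ψ n - V 0 * ψ 0 - ∑ k ∈ range n, V k * (ψ (k+1) - ψ k) := by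
  induction n with
  | zero => simp
  | succ m ih => rw [sum_range_succ, sum_range_succ, ih]; ring

lemma shift_sum (f : ℕ → ℝ) (n : ℕ) :
    ∑ j ∈ range n, f (j+1) = ∑ j ∈ range n, f j + f n - f 0 := by
  have h1 := Finset.sum_range_succ' f n
  have h2 := Finset.sum_range_succ f n
  rw [h2] at h1
  linarith

lemma icc_to_range (f : ℕ → ℝ) (n : ℕ) :
    ∑ k ∈ Icc 1 n, f k = ∑ j ∈ range n, f (j+1) := by
  rw [← Finset.Ico_add_one_right_eq_Icc, Finset.sum_Ico_eq_sum_range]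
  simp [add_comm]

lemma key_strict (p : ℝ) (hp1 : 1 < p) (hp2 : p ≤ 2) (n : ℕ) (hn : 2 ≤ n)
    (x : ℕ → ℝ) (hx0 : ∀ k, 1 ≤ k → k ≤ n → 0 ≤ x k)
    (hxmono : ∀ k, 1 ≤ k → k + 1 ≤ n → x (k + 1) ≤ x k) (hx1 : 0 < x 1)
    (hne : ¬ ∀ k, 1 ≤ k → k ≤ n → x k = x 1) :
    (∑ i ∈ Icc 1 n, (i : ℝ) ^ (p - 1)) * (∑ k ∈ Icc 1 n, x k) ^ p
      < (n : ℝ) ^ p * ∑ k ∈ Icc 1 n, x k * (∑ i ∈ Icc 1 k, x i) ^ (p - 1) := by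
  classical
  set S : ℝ := ∑ k ∈ Icc 1 n, x k with hSdef
  set y : ℕ → ℝ := fun k => ∑ i ∈ Icc 1 k, x i with hydef
  have hn1 : 1 ≤ n := le_trans (by norm_num) hn
  have hnR : (0:ℝ) < n := by exact_mod_cast Nat.pos_of_ne_zero (by omega)
  -- monotonicity chain
  have hmono' : ∀ i j, 1 ≤ i → i ≤ j → j ≤ n → x j ≤ x i := by
    intro i j hi hij hjn
    induction j with
    | zero => omega
    | succ m ih =>
      rcases Nat.eq_or_lt_of_le hij with h | h
      · rw [h]
      · have him : i ≤ m := by omega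
        have h1 : x (m+1) ≤ x m := hxmono m (by omega) hjn
        exact h1.trans (ih him (by omega))
  have hS0 : 0 < S := by
    have h1 : x 1 ≤ S := Finset.single_le_sum (fun i hi => hx0 i (mem_Icc.mp hi).1 (mem_Icc.mp hi).2)
      (mem_Icc.mpr ⟨le_refl 1, hn1⟩)
    linarith
  set c : ℝ := S / n with hcdef
  have hc : 0 < c := div_pos hS0 hnR
  have hnc : (n : ℝ) * c = S := by rw [hcdef]; field_simp
  -- y lemmas
  have hy0 : y 0 = 0 := by simp [hydef]
  have hy_succ : ∀ k : ℕ, y (k+1) = y k + x (k+1) := by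
    intro k
    simp only [hydef]
    rw [Finset.sum_Icc_succ_top (by omega : 1 ≤ k + 1)]
  have hyn : y n = S := rfl
  have hypos : ∀ k, 1 ≤ k → k ≤ n → 0 < y k := by
    intro k hk1 hkn
    have h1 : x 1 ≤ y k := Finset.single_le_sum
      (fun i hi => hx0 i (mem_Icc.mp hi).1 (le_trans (mem_Icc.mp hi).2 hkn))
      (mem_Icc.mpr ⟨le_refl 1, hk1⟩)
    linarith
  set V : ℕ → ℝ := fun k => y k - k * c with hVdef
  have hV0 : V 0 = 0 := by simp [hVdef, hy0]
  have hVn : V n = 0 := by simp [hVdef, hyn, hnc]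
  have hVsucc : ∀ k : ℕ, V (k+1) - V k = x (k+1) - c := by
    intro k
    simp only [hVdef, hy_succ k]
    push_cast
    ring
  -- prefix averages: V k ≥ 0
  have hVnonneg : ∀ k, k ≤ n → 0 ≤ V k := by
    intro k hkn
    rcases Nat.eq_zero_or_pos k with hk0 | hk1
    · rw [hk0]; rw [hV0]
    -- k ≥ 1
    have hsplit : y k + ∑ i ∈ Ioc k n, x i = S := by
      simp only [hydef, hSdef]
      rw [show Icc 1 k = Ioc 0 k from Finset.Icc_add_one_left_eq_Ioc 0 k,
        show Icc 1 n = Ioc 0 n from Finset.Icc_add_one_left_eq_Ioc 0 n]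
      exact Finset.sum_Ioc_consecutive x (Nat.zero_le k) hkn
    have hyk : (k : ℝ) * x k ≤ y k := by
      have h1 : ∑ _i ∈ Icc 1 k, x k ≤ y k :=
        Finset.sum_le_sum (fun i hi => hmono' i k (mem_Icc.mp hi).1 (mem_Icc.mp hi).2 hkn)
      simpa [Nat.card_Icc, mul_comm] using h1
    have htail : ∑ i ∈ Ioc k n, x i ≤ ((n : ℝ) - k) * x k := by
      have h1 : ∑ i ∈ Ioc k n, x i ≤ ∑ _i ∈ Ioc k n, x k :=
        Finset.sum_le_sum (fun i hi => hmono' k i hk1 (le_of_lt (mem_Ioc.mp hi).1) (mem_Ioc.mp hi).2)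
      have h2 : ((n - k : ℕ) : ℝ) = (n : ℝ) - k := by
        push_cast [Nat.cast_sub hkn]; ring
      simpa [Nat.card_Ioc, h2, mul_comm] using h1
    have hxknn : 0 ≤ x k := hx0 k hk1 hkn
    have hkR : (0:ℝ) < k := by exact_mod_cast hk1
    have hkn' : (k:ℝ) ≤ n := by exact_mod_cast hkn
    -- goal: 0 ≤ y k - k * c, i.e. k * S ≤ n * y k
    have key : (k : ℝ) * S ≤ (n : ℝ) * y k := by
      have h3 : (k:ℝ) * S = k * y k + k * ∑ i ∈ Ioc k n, x i := by
        rw [← hsplit]; ring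
      have h4 : (k:ℝ) * ∑ i ∈ Ioc k n, x i ≤ k * (((n:ℝ) - k) * x k) :=
        mul_le_mul_of_nonneg_left htail hkR.le
      have h5 : (k:ℝ) * (((n:ℝ) - k) * x k) ≤ ((n:ℝ) - k) * y k := by
        have := mul_le_mul_of_nonneg_left hyk (by linarith : (0:ℝ) ≤ (n:ℝ) - k)
        nlinarith
      nlinarith
    simp only [hVdef, hcdef]
    rw [sub_nonneg, mul_div_assoc']
    rw [div_le_iff₀ hnR]
    nlinarith
  clear_value S y c V
  -- strictness data
  push_neg at hne
  obtain ⟨k0, hk01, hk0n, hk0ne⟩ := hne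
  have hxle1 : ∀ i, 1 ≤ i → i ≤ n → x i ≤ x 1 := fun i hi hin => hmono' 1 i le_rfl hi hin
  have hSlt : S < n * x 1 := by
    have h1 : S < ∑ _i ∈ Icc 1 n, x 1 := by
      rw [hSdef]
      apply Finset.sum_lt_sum
      · intro i hi; exact hxle1 i (mem_Icc.mp hi).1 (mem_Icc.mp hi).2
      · exact ⟨k0, mem_Icc.mpr ⟨hk01, hk0n⟩, lt_of_le_of_ne (hxle1 k0 hk01 hk0n) hk0ne⟩
    simpa [Nat.card_Icc, mul_comm] using h1
  have hcx1 : c < x 1 := by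
    rw [hcdef, div_lt_iff₀ hnR]; nlinarith
  -- find m : least index with a strict drop, all earlier equal x 1
  have hex : ∃ j, 1 ≤ j ∧ j + 1 ≤ n ∧ x (j+1) ≠ x 1 := by
    have hk02 : 2 ≤ k0 := by
      rcases Nat.lt_or_ge k0 2 with h | h
      · interval_cases k0
        · exact absurd rfl hk0ne
      · exact h
    exact ⟨k0 - 1, by omega, by omega, by
      have : k0 - 1 + 1 = k0 := by omega
      rw [this]; exact hk0ne⟩
  have hexm : ∃ m, 1 ≤ m ∧ m + 1 ≤ n ∧ x (m+1) ≠ x 1 ∧ (∀ i, 1 ≤ i → i ≤ m → x i = x 1) := by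
    obtain ⟨hm1, hmn, hmne⟩ := Nat.find_spec hex
    refine ⟨Nat.find hex, hm1, hmn, hmne, ?_⟩
    intro i hi him
    rcases Nat.eq_or_lt_of_le hi with h | h
    · rw [← h]
    · have hj := Nat.find_min hex (m := i - 1) (by omega)
      push_neg at hj
      have h2 := hj (by omega) (by omega)
      have hi1 : i - 1 + 1 = i := by omega
      rw [hi1] at h2
      exact h2
  obtain ⟨m, hm1, hmn, hmne, hxm_eq⟩ := hexm
  have hym : y m = m * x 1 := by
    simp only [hydef]
    rw [Finset.sum_congr rfl (fun i hi => hxm_eq i (mem_Icc.mp hi).1 (mem_Icc.mp hi).2)]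
    simp [Nat.card_Icc, mul_comm]
  have hVm : 0 < V m := by
    simp only [hVdef, hym]
    have hmR : (0:ℝ) < m := by exact_mod_cast hm1
    nlinarith
  have hxdrop : x (m+1) < x m := by
    have h1 : x m = x 1 := hxm_eq m hm1 le_rfl
    have h2 : x (m+1) ≤ x m := hxmono m hm1 hmn
    rcases lt_or_eq_of_le h2 with h | h
    · exact h
    · exact absurd (h.trans h1) hmne
  -- the path
  set d : ℝ → ℕ → ℝ := fun t k => c + t * (x k - c) with hddef
  set z : ℝ → ℕ → ℝ := fun t k => k * c + t * V k with hzdef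
  set G : ℝ → ℝ := fun t => ∑ k ∈ Icc 1 n, d t k * z t k ^ (p-1) with hGdef
  set G' : ℝ → ℝ := fun t => ∑ k ∈ Icc 1 n,
      ((x k - c) * z t k ^ (p-1) + d t k * ((p-1) * z t k ^ (p-1-1) * V k)) with hG'def
  clear_value d z G G'
  have hz_pos : ∀ t : ℝ, 0 ≤ t → ∀ k, 1 ≤ k → k ≤ n → 0 < z t k := by
    intro t ht k hk1 hkn
    have h1 : (0:ℝ) < k * c := by
      have : (0:ℝ) < (k:ℝ) := by exact_mod_cast hk1
      positivity
    have h2 : 0 ≤ t * V k := mul_nonneg ht (hVnonneg k hkn)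
    simp only [hzdef]; linarith
  have hz_succ : ∀ (t : ℝ) (k : ℕ), z t (k+1) = z t k + d t (k+1) := by
    intro t k
    have := hVsucc k
    simp only [hzdef, hddef]
    push_cast
    linear_combination t * hVsucc k
  have hd_nonneg : ∀ t : ℝ, 0 ≤ t → t ≤ 1 → ∀ k, 1 ≤ k → k ≤ n → 0 ≤ d t k := by
    intro t ht0 ht1 k hk1 hkn
    have h1 : d t k = (1 - t) * c + t * x k := by simp only [hddef]; ring
    rw [h1]
    exact add_nonneg (mul_nonneg (by linarith) hc.le) (mul_nonneg ht0 (hx0 k hk1 hkn))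
  have hd_mono : ∀ t : ℝ, 0 ≤ t → ∀ k, 1 ≤ k → k + 1 ≤ n → d t (k+1) ≤ d t k := by
    intro t ht k hk1 hkn
    simp only [hddef]
    have h2 : t * (x (k+1) - c) ≤ t * (x k - c) :=
      mul_le_mul_of_nonneg_left (by linarith [hxmono k hk1 hkn]) ht
    linarith
  -- derivative
  have hG'deriv : ∀ t : ℝ, 0 ≤ t → t ≤ 1 → HasDerivAt G (G' t) t := by
    intro t ht0 ht1
    rw [hGdef, hG'def]
    apply HasDerivAt.fun_sum
    intro k hk
    obtain ⟨hk1, hkn⟩ := mem_Icc.mp hk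
    have hd : HasDerivAt (fun t => d t k) (x k - c) t := by
      simp only [hddef]
      simpa using (((hasDerivAt_id t).mul_const (x k - c)).const_add c)
    have hzd : HasDerivAt (fun t => z t k) (V k) t := by
      simp only [hzdef]
      simpa using (((hasDerivAt_id t).mul_const (V k)).const_add ((k:ℝ) * c))
    have hzne : z t k ≠ 0 := (hz_pos t ht0 k hk1 hkn).ne'
    have hr : HasDerivAt (fun t => z t k ^ (p-1)) ((p-1) * z t k ^ (p-1-1) * V k) t := by
      have h := hzd.rpow_const (p := p - 1) (Or.inl hzne)
      convert h using 1
      ring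
    exact hd.mul hr
  -- positivity of derivative on (0,1)
  have hG'pos : ∀ t : ℝ, 0 < t → t < 1 → 0 < G' t := by
    intro t ht0 ht1
    have ht0' : (0:ℝ) ≤ t := ht0.le
    set ψ : ℕ → ℝ := fun k => z t k ^ (p-1) with hψdef
    set ζ : ℕ → ℝ := fun k => z t k ^ (p-1-1) with hζdef
    have hsplit : G' t = (∑ k ∈ Icc 1 n, (x k - c) * ψ k)
        + (p-1) * ∑ k ∈ Icc 1 n, d t k * ζ k * V k := by
      simp only [hG'def, hψdef, hζdef]
      rw [Finset.sum_add_distrib, Finset.mul_sum]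
      congr 1
      apply Finset.sum_congr rfl
      intro k _
      ring
    -- Abel on the first sum
    have hfirst : ∑ k ∈ Icc 1 n, (x k - c) * ψ k
        = - ∑ j ∈ range n, V j * (ψ (j+1) - ψ j) := by
      rw [icc_to_range (fun k => (x k - c) * ψ k) n]
      have h1 : ∀ j, (x (j+1) - c) * ψ (j+1) = (V (j+1) - V j) * ψ (j+1) := by
        intro j; rw [hVsucc j]
      rw [Finset.sum_congr rfl (fun j _ => h1 j), abel_id ψ V n, hVn, hV0]
      ring
    -- bound each Abel term
    have hbound : ∀ j ∈ range n, V j * (ψ (j+1) - ψ j) ≤ V j * ((p-1) * ζ j * d t (j+1)) := by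
      intro j hj
      have hjn : j < n := mem_range.mp hj
      rcases Nat.eq_zero_or_pos j with hj0 | hj1
      · rw [hj0]; rw [hV0]; simp
      · have hVj : 0 ≤ V j := hVnonneg j hjn.le
        apply mul_le_mul_of_nonneg_left _ hVj
        have hq0 : 0 < p - 1 := by linarith
        have hq1 : p - 1 ≤ 1 := by linarith
        have ha : 0 < z t j := hz_pos t ht0' j hj1 hjn.le
        have hab : z t j ≤ z t (j+1) := by
          rw [hz_succ t j]
          have := hd_nonneg t ht0' ht1.le (j+1) (by omega) hjn
          linarith
        have := tangent_rpow hq0 hq1 ha hab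
        have hba : z t (j+1) - z t j = d t (j+1) := by rw [hz_succ t j]; ring
        rw [hba] at this
        simp only [hψdef, hζdef]
        calc z t (j+1) ^ (p-1) - z t j ^ (p-1)
            ≤ (p-1) * z t j ^ (p-1-1) * d t (j+1) := this
          _ = (p-1) * z t j ^ (p-1-1) * d t (j+1) := rfl
    -- second sum rewritten over range
    have hsecond : ∑ k ∈ Icc 1 n, d t k * ζ k * V k
        = ∑ j ∈ range n, d t j * ζ j * V j := by
      rw [icc_to_range (fun k => d t k * ζ k * V k) n]
      rw [shift_sum (fun k => d t k * ζ k * V k) n]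
      rw [hVn, hV0]
      simp
    have hcomb : G' t ≥ (p-1) * ∑ j ∈ range n, (d t j - d t (j+1)) * ζ j * V j := by
      rw [hsplit, hfirst, hsecond]
      have h2 : ∑ j ∈ range n, V j * (ψ (j+1) - ψ j)
          ≤ ∑ j ∈ range n, V j * ((p-1) * ζ j * d t (j+1)) :=
        Finset.sum_le_sum hbound
      have h4 : ∑ j ∈ range n, ((p-1) * (d t j * ζ j * V j) - V j * ((p-1) * ζ j * d t (j+1)))
          = ∑ j ∈ range n, (p-1) * (d t j * ζ j * V j)
            - ∑ j ∈ range n, V j * ((p-1) * ζ j * d t (j+1)) := Finset.sum_sub_distrib _ _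
      have h5 : ∑ j ∈ range n, ((p-1) * (d t j * ζ j * V j) - V j * ((p-1) * ζ j * d t (j+1)))
          = ∑ j ∈ range n, (p-1) * ((d t j - d t (j+1)) * ζ j * V j) :=
        Finset.sum_congr rfl (fun j _ => by ring)
      have h6 : ∑ j ∈ range n, (p-1) * ((d t j - d t (j+1)) * ζ j * V j)
          = (p-1) * ∑ j ∈ range n, (d t j - d t (j+1)) * ζ j * V j := (Finset.mul_sum _ _ _).symm
      have h7 : (p-1) * ∑ j ∈ range n, d t j * ζ j * V j
          = ∑ j ∈ range n, (p-1) * (d t j * ζ j * V j) := Finset.mul_sum _ _ _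
      linarith
    have hterm_nonneg : ∀ j ∈ range n, 0 ≤ (d t j - d t (j+1)) * ζ j * V j := by
      intro j hj
      have hjn : j < n := mem_range.mp hj
      rcases Nat.eq_zero_or_pos j with hj0 | hj1
      · rw [hj0, hV0]; simp
      · have h1 : 0 ≤ d t j - d t (j+1) := by
          have := hd_mono t ht0' j hj1 hjn
          linarith
        have h2 : 0 ≤ ζ j := (Real.rpow_pos_of_pos (hz_pos t ht0' j hj1 hjn.le) _).le
        have h3 : 0 ≤ V j := hVnonneg j hjn.le
        exact mul_nonneg (mul_nonneg h1 h2) h3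
    have htermm : 0 < (d t m - d t (m+1)) * ζ m * V m := by
      have h1 : 0 < d t m - d t (m+1) := by
        simp only [hddef]
        nlinarith [mul_pos ht0 (sub_pos.mpr hxdrop)]
      have h2 : 0 < ζ m := Real.rpow_pos_of_pos (hz_pos t ht0' m hm1 (by omega)) _
      exact mul_pos (mul_pos h1 h2) hVm
    have hRpos : 0 < ∑ j ∈ range n, (d t j - d t (j+1)) * ζ j * V j :=
      Finset.sum_pos' hterm_nonneg ⟨m, mem_range.mpr (by omega), htermm⟩
    have hfin : 0 < (p-1) * ∑ j ∈ range n, (d t j - d t (j+1)) * ζ j * V j :=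
      mul_pos (by linarith) hRpos
    linarith
  -- strict monotonicity
  have hmonoG : StrictMonoOn G (Set.Icc 0 1) := by
    apply strictMonoOn_of_deriv_pos (convex_Icc 0 1)
    · intro t ht
      exact (hG'deriv t ht.1 ht.2).continuousAt.continuousWithinAt
    · intro t ht
      rw [interior_Icc] at ht
      rw [(hG'deriv t ht.1.le ht.2.le).deriv]
      exact hG'pos t ht.1 ht.2
  have hG01 : G 0 < G 1 :=
    hmonoG (Set.mem_Icc.mpr ⟨le_refl 0, zero_le_one⟩) (Set.mem_Icc.mpr ⟨zero_le_one, le_refl 1⟩)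
      zero_lt_one
  -- compute endpoints
  have hG0 : G 0 = (∑ i ∈ Icc 1 n, (i : ℝ) ^ (p - 1)) * c ^ p := by
    simp only [hGdef, hddef, hzdef]
    rw [Finset.sum_mul]
    apply Finset.sum_congr rfl
    intro k hk
    obtain ⟨hk1, _⟩ := mem_Icc.mp hk
    have hkR : (0:ℝ) ≤ (k:ℝ) := Nat.cast_nonneg k
    simp only [zero_mul, add_zero, mul_zero]
    rw [Real.mul_rpow hkR hc.le]
    have hcp : c ^ p = c * c ^ (p-1) := by
      have h := Real.rpow_add hc 1 (p-1)
      rw [Real.rpow_one] at h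
      rw [show (1:ℝ) + (p-1) = p by ring] at h
      exact h
    rw [hcp]
    ring
  have hG1 : G 1 = ∑ k ∈ Icc 1 n, x k * y k ^ (p - 1) := by
    simp only [hGdef, hddef, hzdef]
    apply Finset.sum_congr rfl
    intro k _
    have h1 : c + 1 * (x k - c) = x k := by ring
    have h2 : (k:ℝ) * c + 1 * V k = y k := by simp only [hVdef]; ring
    rw [h1, h2]
  -- conclude
  have hSnc : S = (n:ℝ) * c := hnc.symm
  have hSp : S ^ p = (n:ℝ) ^ p * c ^ p := by
    rw [hSnc, Real.mul_rpow hnR.le hc.le]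
  have hnp : (0:ℝ) < (n:ℝ) ^ p := Real.rpow_pos_of_pos hnR p
  calc (∑ i ∈ Icc 1 n, (i : ℝ) ^ (p - 1)) * S ^ p
      = (n:ℝ) ^ p * G 0 := by rw [hSp, hG0]; ring
    _ < (n:ℝ) ^ p * G 1 := by exact mul_lt_mul_of_pos_left hG01 hnp
    _ = (n:ℝ) ^ p * ∑ k ∈ Icc 1 n, x k * y k ^ (p - 1) := by rw [hG1]
    _ = (n:ℝ) ^ p * ∑ k ∈ Icc 1 n, x k * (∑ i ∈ Icc 1 k, x i) ^ (p - 1) := by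
        simp only [hydef]

/-- Equality case of the refined power rule with unit weights: for `1 < p ≤ 2`
and a non-negative non-increasing tuple `x` with `x 1 > 0`, `f_n(x) = 0` iff all
coordinates are equal. -/
theorem equality_case (p : ℝ) (hp1 : 1 < p) (hp2 : p ≤ 2) (n : ℕ) (hn : 2 ≤ n)
    (x : ℕ → ℝ) (hx0 : ∀ k, 1 ≤ k → k ≤ n → 0 ≤ x k)
    (hxmono : ∀ k, 1 ≤ k → k + 1 ≤ n → x (k + 1) ≤ x k) (hx1 : 0 < x 1) :
    (∑ k ∈ Finset.Icc 1 n, x k) ^ p -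
        (n : ℝ) ^ p / (∑ i ∈ Finset.Icc 1 n, (i : ℝ) ^ (p - 1)) *
          ∑ k ∈ Finset.Icc 1 n, x k * (∑ i ∈ Finset.Icc 1 k, x i) ^ (p - 1) = 0 ↔
      ∀ k, 1 ≤ k → k ≤ n → x k = x 1 := by
  have hA : 0 < ∑ i ∈ Finset.Icc 1 n, (i : ℝ) ^ (p - 1) := by
    apply Finset.sum_pos
    · intro i hi
      have h1 : (0:ℝ) < i := by exact_mod_cast (Finset.mem_Icc.mp hi).1
      exact Real.rpow_pos_of_pos h1 _
    · exact ⟨1, Finset.mem_Icc.mpr ⟨le_rfl, by omega⟩⟩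
  constructor
  · intro h
    by_contra hne
    have hk := key_strict p hp1 hp2 n hn x hx0 hxmono hx1 hne
    have h2 : (∑ k ∈ Finset.Icc 1 n, x k) ^ p
        = (n:ℝ)^p / (∑ i ∈ Finset.Icc 1 n, (i : ℝ) ^ (p - 1))
          * ∑ k ∈ Finset.Icc 1 n, x k * (∑ i ∈ Finset.Icc 1 k, x i) ^ (p - 1) := by
      linarith
    rw [div_mul_eq_mul_div, eq_div_iff hA.ne'] at h2
    rw [mul_comm] at h2
    linarith
  · intro h
    have hy : ∀ k, 1 ≤ k → k ≤ n → (∑ i ∈ Finset.Icc 1 k, x i) = (k:ℝ) * x 1 := by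
      intro k hk1 hkn
      rw [Finset.sum_congr rfl (fun i hi => h i (Finset.mem_Icc.mp hi).1
        (le_trans (Finset.mem_Icc.mp hi).2 hkn))]
      simp [Nat.card_Icc, mul_comm]
    have hS : (∑ k ∈ Finset.Icc 1 n, x k) = (n:ℝ) * x 1 := hy n (by omega) le_rfl
    have hx1p : x 1 ^ p = x 1 * x 1 ^ (p-1) := by
      have hh := Real.rpow_add hx1 1 (p-1)
      rw [Real.rpow_one] at hh
      rw [show (1:ℝ) + (p-1) = p by ring] at hh
      exact hh
    have hSig : ∑ k ∈ Finset.Icc 1 n, x k * (∑ i ∈ Finset.Icc 1 k, x i) ^ (p-1)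
        = (∑ i ∈ Finset.Icc 1 n, (i : ℝ) ^ (p - 1)) * x 1 ^ p := by
      rw [Finset.sum_mul]
      apply Finset.sum_congr rfl
      intro k hk
      obtain ⟨hk1, hkn⟩ := Finset.mem_Icc.mp hk
      rw [h k hk1 hkn, hy k hk1 hkn, Real.mul_rpow (Nat.cast_nonneg k) hx1.le]
      rw [hx1p]; ring
    rw [hS, hSig, Real.mul_rpow (Nat.cast_nonneg n) hx1.le]
    have hdiv : (n:ℝ)^p / (∑ i ∈ Finset.Icc 1 n, (i : ℝ) ^ (p - 1))
        * ((∑ i ∈ Finset.Icc 1 n, (i : ℝ) ^ (p - 1)) * x 1 ^ p) = (n:ℝ)^p * x 1 ^ p := by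
      field_simp
    rw [hdiv]
    ring
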